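/- arXiv:1806.03927 — 2 statements merged into one kernel-verified Lean document; each statement's English description precedes it below -/
import Mathlib

section
/- Let A be an abelian group and let φ : A^r → B be a homomorphism of abelian groups given by (x₀, …, x_{r-1}) ↦ Σ α^i · p(x_i) where p : A → B is a homomorphism and α · (−) : B → B is a fixed endomorphism. If φ is an isomorphism, then the map A → B, a ↦ ν · p(a), induced by an element ν = Σ_{i=0}^{r} (-1)^i c_i α^{r-i} (with c_i acting as endomorphisms of B commuting with α and with the image of p, c₀ = 1), restricted suitably, identifies A with the kernel of the projection B → B/νB killing the top graded piece. Concretely: if B ≅ ⊕_{i=0}^{r-1} A via φ and multiplication by α shifts the grading sending the top piece into the span of lower ones via the relation ν = 0 on the quotient, then a ↦ ν·p(a) is injective with image a direct summand isomorphic to A. -/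
open Finset

/-- Abstract form of the projective bundle argument: if `B` is isomorphic to
`⊕_{i=0}^{r} A` via `(x_i) ↦ Σ α^i p(x_i)`, and `ν = Σ_{i=0}^{r} (-1)^i c_i α^{r-i}`
with `c_0 = 1` and the `c_i` commuting with `α` and with the image of `p`
(via endomorphisms `γ_i` of `A`, `γ_0 = 1`), then `a ↦ ν(p(a))` is injective and
its image is a direct summand of `B` isomorphic to `A` (it admits a retraction). -/
theorem nu_mul_injective_split {A B : Type*} [AddCommGroup A] [AddCommGroup B]
    (r : ℕ) (hr : 1 ≤ r) (p : A →ₗ[ℤ] B) (α : Module.End ℤ B)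
    (c : Fin (r + 1) → Module.End ℤ B) (hc0 : c 0 = 1)
    (hcomm : ∀ i, c i * α = α * c i)
    (γ : Fin (r + 1) → Module.End ℤ A) (hγ0 : γ 0 = 1)
    (hγ : ∀ (i) (a : A), c i (p a) = p (γ i a))
    (hφ : Function.Bijective fun x : Fin (r + 1) → A =>
        ∑ i : Fin (r + 1), (α ^ (i : ℕ)) (p (x i))) :
    Function.Injective (fun a : A =>
        (∑ i : Fin (r + 1), ((-1 : ℤ) ^ (i : ℕ)) • (c i * α ^ (r - (i : ℕ)))) (p a)) ∧
    ∃ π : B →ₗ[ℤ] A, ∀ a : A,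
        π ((∑ i : Fin (r + 1), ((-1 : ℤ) ^ (i : ℕ)) • (c i * α ^ (r - (i : ℕ)))) (p a))
          = a := by
  have hcommn : ∀ (i : Fin (r + 1)) (n : ℕ), c i * α ^ n = α ^ n * c i := by
    intro i n
    induction n with
    | zero => simp
    | succ n ih => rw [pow_succ, ← mul_assoc, ih, mul_assoc, hcomm, ← mul_assoc]
  set Φ : (Fin (r + 1) → A) →ₗ[ℤ] B :=
    ∑ i : Fin (r + 1), ((α ^ (i : ℕ) : Module.End ℤ B) ∘ₗ p) ∘ₗ LinearMap.proj i with hΦ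
  have hΦapp : ∀ x, Φ x = ∑ i : Fin (r + 1), (α ^ (i : ℕ)) (p (x i)) := by
    intro x; simp [hΦ, LinearMap.sum_apply]
  have hΦbij : Function.Bijective Φ := by
    have h : ⇑Φ = fun x : Fin (r + 1) → A =>
        ∑ i : Fin (r + 1), (α ^ (i : ℕ)) (p (x i)) := funext hΦapp
    rw [h]; exact hφ
  set e := LinearEquiv.ofBijective Φ hΦbij with he
  set xm : A → Fin (r + 1) → A :=
    fun a j => ((-1 : ℤ) ^ ((j.rev : ℕ))) • γ j.rev a with hxm
  have key : ∀ a,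
      (∑ i : Fin (r + 1), ((-1 : ℤ) ^ (i : ℕ)) • (c i * α ^ (r - (i : ℕ)))) (p a)
        = Φ (xm a) := by
    intro a
    rw [hΦapp, ← Equiv.sum_comp Fin.revPerm (fun j => (α ^ (j : ℕ)) (p (xm a j))),
      LinearMap.sum_apply]
    simp only [Fin.revPerm_apply]
    refine Finset.sum_congr rfl fun i _ => ?_
    have hval : ((i.rev : Fin (r + 1)) : ℕ) = r - (i : ℕ) := by
      simp [Fin.val_rev]
    rw [hcommn i (r - (i : ℕ))]
    simp only [hxm, Fin.rev_rev, hval, LinearMap.smul_apply, Module.End.mul_apply,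
      map_smul, hγ]
  have hret : ∀ a,
      (LinearMap.proj (Fin.last r) ∘ₗ (e.symm : B →ₗ[ℤ] (Fin (r + 1) → A)))
        ((∑ i : Fin (r + 1), ((-1 : ℤ) ^ (i : ℕ)) • (c i * α ^ (r - (i : ℕ)))) (p a))
        = a := by
    intro a
    rw [key a]
    have : e.symm (Φ (xm a)) = xm a := by
      have : Φ (xm a) = e (xm a) := rfl
      rw [this, e.symm_apply_apply]
    simp only [LinearMap.comp_apply, LinearEquiv.coe_coe, this, LinearMap.proj_apply]
    simp [hxm, Fin.rev_last, hγ0]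
  refine ⟨?_, ⟨_, hret⟩⟩
  intro a b hab
  have h := congrArg (LinearMap.proj (Fin.last r) ∘ₗ (e.symm : B →ₗ[ℤ] (Fin (r + 1) → A))) hab
  simp only at h
  rw [hret a, hret b] at h
  exact h
end

section
/- Let f : X → S be a morphism admitting a section i : S → X, and form the pullback square expressing i as the composition S → S ×_S X = X. Given families of maps ξ (for smooth morphisms) and ψ (for closed immersions/proper morphisms) satisfying: ξ is compatible with composition, ψ is compatible with composition, ξ_f · ψ_i = 1 whenever i is a section of a smooth f, and base-change compatibility ξ_f · ψ_k = ψ_i · ξ_g for Cartesian squares with i, k closed immersions and f, g smooth — then for any smooth p : Y → X and closed immersion i : Z → Y with q = p∘i a closed immersion, one has ξ_p · ψ_i = ψ_q. -/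
open CategoryTheory Limits

/-- Corollary 3.13 abstractly: given an object assignment `ob : C → D`, a family `ξ`
indexed by "smooth morphisms" (`Sm`) and a family `ψ` indexed by "closed immersions"
(`Cl`), each compatible with composition, such that `ξ_f · ψ_i = 1` whenever `i` is a
section of a smooth `f`, and satisfying base-change compatibility on Cartesian squares
(closed immersions against smooth morphisms), then for any smooth `p : Y ⟶ X` and
closed immersion `i : Z ⟶ Y` whose composite `q = p ∘ i` is a closed immersion, one
has `ξ_p · ψ_i = ψ_q`. -/
theorem xi_closed_smooth {C D : Type*} [Category C] [Category D] [HasPullbacks C]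
    (ob : C → D) (Sm Cl : MorphismProperty C)
    [Sm.IsStableUnderBaseChange] [Cl.IsStableUnderBaseChange]
    (ξ : ∀ {X Y : C} (f : X ⟶ Y), Sm f → (ob X ⟶ ob Y))
    (ψ : ∀ {X Y : C} (i : X ⟶ Y), Cl i → (ob X ⟶ ob Y))
    -- sections of smooth morphisms are closed immersions
    (hClsec : ∀ {S X : C} (f : X ⟶ S) (s : S ⟶ X), Sm f → s ≫ f = 𝟙 S → Cl s)
    -- `ξ` is compatible with composition of smooth morphisms
    (hξcomp : ∀ {X Y Z : C} (f : X ⟶ Y) (g : Y ⟶ Z) (hf : Sm f) (hg : Sm g)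
      (hfg : Sm (f ≫ g)), ξ (f ≫ g) hfg = ξ f hf ≫ ξ g hg)
    -- `ψ` is compatible with composition of closed immersions
    (hψcomp : ∀ {X Y Z : C} (i : X ⟶ Y) (i' : Y ⟶ Z) (hi : Cl i) (hi' : Cl i')
      (hii' : Cl (i ≫ i')), ψ (i ≫ i') hii' = ψ i hi ≫ ψ i' hi')
    -- `ξ_f · ψ_s = 1` whenever `s` is a section of a smooth morphism `f`
    (hsec : ∀ {S X : C} (f : X ⟶ S) (s : S ⟶ X) (hf : Sm f) (hs : Cl s),
      s ≫ f = 𝟙 S → ψ s hs ≫ ξ f hf = 𝟙 (ob S))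
    -- base-change compatibility on Cartesian squares: `k ≫ f = g ≫ i`, `k, i` closed,
    -- `f, g` smooth
    (hbc : ∀ {Y T X S : C} (k : Y ⟶ X) (g : Y ⟶ T) (f : X ⟶ S) (i : T ⟶ S),
      IsPullback k g f i → ∀ (hk : Cl k) (hg : Sm g) (hf : Sm f) (hi : Cl i),
      ψ k hk ≫ ξ f hf = ξ g hg ≫ ψ i hi) :
    ∀ {Z Y X : C} (i : Z ⟶ Y) (p : Y ⟶ X) (hi : Cl i) (hp : Sm p)
      (hq : Cl (i ≫ p)), ψ i hi ≫ ξ p hp = ψ (i ≫ p) hq := by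
  intro Z Y X i p hi hp hq
  set q : Z ⟶ X := i ≫ p with hqdef
  let W := pullback q p
  let fst : W ⟶ Z := pullback.fst q p
  let snd : W ⟶ Y := pullback.snd q p
  have sq : IsPullback fst snd q p := IsPullback.of_hasPullback q p
  have hSmfst : Sm fst := MorphismProperty.of_isPullback sq.flip hp
  have hClsnd : Cl snd := MorphismProperty.of_isPullback sq hq
  let i' : Z ⟶ W := pullback.lift (𝟙 Z) i (by simp [hqdef])
  have hi'fst : i' ≫ fst = 𝟙 Z := by exact pullback.lift_fst ..
  have hi'snd : i' ≫ snd = i := by exact pullback.lift_snd ..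
  have hCli' : Cl i' := hClsec fst i' hSmfst hi'fst
  have hψi : ψ i hi = ψ i' hCli' ≫ ψ snd hClsnd := by
    have := hψcomp i' snd hCli' hClsnd (hi'snd ▸ hi)
    rw [← this]
    congr 1 <;> rw [hi'snd]
  rw [hψi, Category.assoc, hbc snd fst p q sq.flip hClsnd hSmfst hp hq,
    ← Category.assoc, hsec fst i' hSmfst hCli' hi'fst, Category.id_comp]
end
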